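/- (Observation, first part) Let A : Fin n → α and B : Fin m → α be monotone (non-decreasing) sequences in a linear order α. Let i : Fin n, a = A i, and j = rankLow(a, B). Then for every index j' : Fin m with j' < j, the cross rank of B j' in A is not after i, i.e., rankHigh(B j', A) ≤ i. -/
import Mathlib


/-- `rankLow x B` is the number of elements of `B` that are strictly less than `x`. -/
def rankLow {α : Type*} [LinearOrder α] {m : ℕ} (x : α) (B : Fin m → α) : ℕ :=
  (Finset.univ.filter fun j => B j < x).card

/-- `rankHigh x A` is the number of elements of `A` that are less than or equal to `x`. -/
def rankHigh {α : Type*} [LinearOrder α] {n : ℕ} (x : α) (A : Fin n → α) : ℕ :=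
  (Finset.univ.filter fun i => A i ≤ x).card

/-- Observation, first part: if `j = rankLow (A i) B` is the cross rank of `A i` in `B`,
then every element of `B` before position `j` has cross rank in `A` not after `i`. -/
theorem crossRank_before {α : Type*} [LinearOrder α] {n m : ℕ}
    (A : Fin n → α) (B : Fin m → α) (hA : Monotone A) (hB : Monotone B)
    (i : Fin n) :
    ∀ j' : Fin m, (j' : ℕ) < rankLow (A i) B → rankHigh (B j') A ≤ (i : ℕ) := by
  intro j' hj'
  -- First show B j' < A i
  have hBj : B j' < A i := by
    by_contra h
    push_neg at h
    have hsub : (Finset.univ.filter fun j => B j < A i) ⊆ Finset.Iio j' := by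
      intro j hj
      simp only [Finset.mem_filter, Finset.mem_Iio] at hj ⊢
      by_contra hlt
      push_neg at hlt
      exact absurd (lt_of_lt_of_le hj.2 (h.trans (hB hlt))) (lt_irrefl _)
    have := Finset.card_le_card hsub
    rw [Fin.card_Iio] at this
    exact absurd (lt_of_lt_of_le hj' this) (lt_irrefl _)
  -- Now bound rankHigh
  have hsub : (Finset.univ.filter fun i' => A i' ≤ B j') ⊆ Finset.Iic i := by
    intro i' hi'
    simp only [Finset.mem_filter, Finset.mem_Iic] at hi' ⊢
    by_contra hlt
    push_neg at hlt
    exact absurd (lt_of_le_of_lt hi'.2 (hBj.trans_le (hA hlt.le))) (lt_irrefl _)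
  have hsub2 : (Finset.univ.filter fun i' => A i' ≤ B j') ⊆ Finset.Iio i := by
    intro i' hi'
    simp only [Finset.mem_filter, Finset.mem_Iio] at hi' ⊢
    by_contra hle
    push_neg at hle
    exact absurd (lt_of_le_of_lt hi'.2 hBj) (not_lt.mpr (hA hle))
  have := Finset.card_le_card hsub2
  rwa [Fin.card_Iio] at this
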